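/- For every t > 0, the kernel K_t(λ,μ) = exp(−t |(λ−μ)/(1−conj(μ)λ)|²) is strictly positive definite on 𝔻 × 𝔻, where 𝔻 is the open unit disk. -/

import Mathlib

open scoped ComplexOrder ComplexConjugate

/-- The squared pseudo-hyperbolic distance on the open unit disk. -/
noncomputable def pseudoHypDistSq (l m : ℂ) : ℝ :=
  ‖(l - m) / (1 - conj m * l)‖ ^ 2

namespace SPDAux

lemma summable_norm_feat {ι : Type} {v w : ι → ℂ}
    (hv : Summable fun k => ‖v k‖ ^ 2) (hw : Summable fun k => ‖w k‖ ^ 2) :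
    Summable fun k => ‖v k * conj (w k)‖ := by
  refine Summable.of_nonneg_of_le (fun k => norm_nonneg _) (fun k => ?_)
    ((hv.add hw).div_const 2)
  rw [norm_mul, RCLike.norm_conj]
  nlinarith [sq_nonneg (‖v k‖ - ‖w k‖)]

def IsGram {n : ℕ} (K : Fin n → Fin n → ℂ) : Prop :=
  ∃ (ι : Type) (v : ι → Fin n → ℂ),
    (∀ i, Summable fun k => ‖v k i‖ ^ 2) ∧
    ∀ i j, K i j = ∑' k, v k i * conj (v k j)

lemma isGram_one {n : ℕ} : IsGram (fun _ _ : Fin n => (1 : ℂ)) := by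
  refine ⟨PUnit, fun _ _ => 1, fun i => ?_, fun i j => ?_⟩
  · exact Summable.of_finite
  · rw [tsum_fintype]; simp

lemma IsGram.mul {n : ℕ} {K1 K2 : Fin n → Fin n → ℂ} (h1 : IsGram K1) (h2 : IsGram K2) :
    IsGram (fun i j => K1 i j * K2 i j) := by
  obtain ⟨ι1, v, hv, hK1⟩ := h1
  obtain ⟨ι2, w, hw, hK2⟩ := h2
  refine ⟨ι1 × ι2, fun k i => v k.1 i * w k.2 i, fun i => ?_, fun i j => ?_⟩
  · have : (fun k : ι1 × ι2 => ‖v k.1 i * w k.2 i‖ ^ 2)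
        = fun k : ι1 × ι2 => ‖v k.1 i‖ ^ 2 * ‖w k.2 i‖ ^ 2 := by
      funext k; rw [norm_mul]; ring
    rw [this]
    exact Summable.mul_of_nonneg (f := fun k => ‖v k i‖ ^ 2) (g := fun k => ‖w k i‖ ^ 2)
      (hv i) (hw i) (fun k => sq_nonneg _) (fun k => sq_nonneg _)
  · show K1 i j * K2 i j = _
    rw [hK1, hK2, tsum_mul_tsum_of_summable_norm
      (summable_norm_feat (hv i) (hv j)) (summable_norm_feat (hw i) (hw j))]
    congr 1; funext k
    simp only [map_mul]
    ring

lemma IsGram.pow {n : ℕ} {K : Fin n → Fin n → ℂ} (h : IsGram K) :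
    ∀ m : ℕ, IsGram (fun i j => K i j ^ m)
  | 0 => by simpa using isGram_one (n := n)
  | (m + 1) => by
      have := (IsGram.pow h m).mul h
      simpa [pow_succ] using this

lemma gram_eq {n : ℕ} {ι : Type} (v : ι → Fin n → ℂ)
    (hv : ∀ i, Summable fun k => ‖v k i‖ ^ 2) (c : Fin n → ℂ) :
    Summable (fun k => Complex.normSq (∑ i, c i * v k i)) ∧
    ∑ i, ∑ j, c i * conj (c j) * (∑' k, v k i * conj (v k j))
      = ((∑' k, Complex.normSq (∑ i, c i * v k i) : ℝ) : ℂ) := by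
  have hterm : ∀ i j : Fin n, Summable fun k => c i * conj (c j) * (v k i * conj (v k j)) :=
    fun i j => ((summable_norm_feat (hv i) (hv j)).of_norm).mul_left _
  have hpoint : ∀ k, (∑ i, ∑ j, c i * conj (c j) * (v k i * conj (v k j)))
      = ((Complex.normSq (∑ i, c i * v k i) : ℝ) : ℂ) := by
    intro k
    rw [← Complex.mul_conj, map_sum, Finset.sum_mul_sum]
    refine Finset.sum_congr rfl fun i _ => Finset.sum_congr rfl fun j _ => ?_
    simp only [map_mul]
    ring
  have hswap : ∑ i, ∑ j, c i * conj (c j) * (∑' k, v k i * conj (v k j))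
      = ∑' k, ∑ i, ∑ j, c i * conj (c j) * (v k i * conj (v k j)) := by
    have : ∀ i : Fin n, ∑ j, c i * conj (c j) * (∑' k, v k i * conj (v k j))
        = ∑' k, ∑ j, c i * conj (c j) * (v k i * conj (v k j)) := by
      intro i
      rw [Summable.tsum_finsetSum (fun j _ => hterm i j)]
      exact Finset.sum_congr rfl fun j _ => (tsum_mul_left).symm
    rw [Finset.sum_congr rfl fun i _ => this i,
      Summable.tsum_finsetSum (fun i _ => summable_sum (fun j _ => hterm i j))]
  have hsum2 : Summable fun k => ((Complex.normSq (∑ i, c i * v k i) : ℝ) : ℂ) := by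
    have := summable_sum (s := (Finset.univ : Finset (Fin n)))
      (fun i _ => summable_sum (s := (Finset.univ : Finset (Fin n))) (fun j _ => hterm i j))
    exact this.congr fun k => hpoint k
  refine ⟨Complex.summable_ofReal.mp hsum2, ?_⟩
  rw [hswap, tsum_congr hpoint, Complex.ofReal_tsum]

end SPDAux

open SPDAux in
/-- For every `t > 0`, the kernel `K_t(λ,μ) = exp(−t d(λ,μ)²)`, where `d` is the
pseudo-hyperbolic distance, is strictly positive definite on the open unit disk. -/
theorem exp_neg_pseudoHypDistSq_isStrictPosKernel (t : ℝ) (ht : 0 < t)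
    (n : ℕ) (l : Fin n → ℂ) (hl : ∀ i, ‖l i‖ < 1)
    (hinj : Function.Injective l) (c : Fin n → ℂ) (hc : c ≠ 0) :
    0 < ∑ i, ∑ j, c i * conj (c j) *
      (Real.exp (-t * pseudoHypDistSq (l i) (l j)) : ℂ) := by
  classical
  have hb : ∀ i, 0 < 1 - Complex.normSq (l i) := by
    intro i
    have h1 : Complex.normSq (l i) < 1 := by
      rw [← Complex.sq_norm]
      nlinarith [norm_nonneg (l i), hl i]
    linarith
  have habs : ∀ i j, ‖l i * conj (l j)‖ < 1 := by
    intro i j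
    rw [norm_mul, RCLike.norm_conj]
    nlinarith [norm_nonneg (l i), norm_nonneg (l j), hl i, hl j]
  have hden : ∀ i j, (1 : ℂ) - conj (l j) * l i ≠ 0 := by
    intro i j h
    rw [sub_eq_zero] at h
    have h2 := habs i j
    rw [mul_comm] at h2
    rw [← h] at h2
    simp at h2
  set s : Fin n → Fin n → ℝ := fun i j =>
    (1 - Complex.normSq (l i)) * (1 - Complex.normSq (l j)) /
      Complex.normSq (1 - conj (l j) * l i) with hs_def
  have hkey : ∀ i j, Complex.normSq (l i - l j)
      = Complex.normSq (1 - conj (l j) * l i)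
        - (1 - Complex.normSq (l i)) * (1 - Complex.normSq (l j)) := by
    intro i j
    simp only [Complex.normSq_apply, Complex.sub_re, Complex.sub_im, Complex.mul_re,
      Complex.mul_im, Complex.conj_re, Complex.conj_im, Complex.one_re, Complex.one_im]
    ring
  have hDne : ∀ i j, Complex.normSq (1 - conj (l j) * l i) ≠ 0 := by
    intro i j
    simpa [Complex.normSq_eq_zero] using hden i j
  have hdist : ∀ i j, pseudoHypDistSq (l i) (l j) = 1 - s i j := by
    intro i j
    unfold pseudoHypDistSq
    rw [norm_div, div_pow, Complex.sq_norm, Complex.sq_norm, hkey i j, hs_def]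
    rw [sub_div, div_self (hDne i j)]
  have hs_nonneg : ∀ i j, 0 ≤ s i j := by
    intro i j
    apply div_nonneg
    · have := hb i; have := hb j; positivity
    · exact Complex.normSq_nonneg _
  have hs_le_one : ∀ i j, s i j ≤ 1 := by
    intro i j
    have h1 : 0 ≤ pseudoHypDistSq (l i) (l j) := by
      unfold pseudoHypDistSq; positivity
    rw [hdist i j] at h1
    linarith
  -- the Gram representation of the base kernel
  set v : ℕ × ℕ → Fin n → ℂ := fun k i =>
    ((1 - Complex.normSq (l i) : ℝ) : ℂ) * l i ^ k.1 * conj (l i) ^ k.2 with hv_def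
  have hvsum : ∀ i, Summable fun k : ℕ × ℕ => ‖v k i‖ ^ 2 := by
    intro i
    have hr0 : (0:ℝ) ≤ ‖l i‖ ^ 2 := by positivity
    have hr : ‖l i‖ ^ 2 < 1 := by
      nlinarith [norm_nonneg (l i), hl i]
    have h1 : Summable fun k : ℕ =>
        ((1 - Complex.normSq (l i)) ^ 2) * (‖l i‖ ^ 2) ^ k :=
      (summable_geometric_of_lt_one hr0 hr).mul_left _
    have h2 : Summable fun k : ℕ => (‖l i‖ ^ 2) ^ k :=
      summable_geometric_of_lt_one hr0 hr
    have h3 := Summable.mul_of_nonneg h1 h2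
      (fun k => by positivity) (fun k => by positivity)
    refine h3.congr fun k => ?_
    simp only [hv_def, norm_mul, norm_pow, Complex.norm_real, Real.norm_eq_abs,
      RCLike.norm_conj, abs_of_pos (hb i)]
    ring
  have hGramEq : ∀ i j, ((s i j : ℝ) : ℂ) = ∑' k : ℕ × ℕ, v k i * conj (v k j) := by
    intro i j
    set x : ℂ := l i * conj (l j) with hx_def
    have hx : ‖x‖ < 1 := habs i j
    have hxc : ‖conj x‖ < 1 := by rwa [RCLike.norm_conj]
    have hgs1 : Summable fun k : ℕ => ‖x ^ k‖ := by
      simpa [norm_pow] using summable_geometric_of_lt_one (norm_nonneg x)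
        (by simpa using hx)
    have hgs2 : Summable fun k : ℕ => ‖(conj x) ^ k‖ := by
      simpa [norm_pow] using summable_geometric_of_lt_one (norm_nonneg (conj x))
        (by simpa using hxc)
    have hterm : ∀ k : ℕ × ℕ, v k i * conj (v k j)
        = ((1 - Complex.normSq (l i) : ℝ) : ℂ) * ((1 - Complex.normSq (l j) : ℝ) : ℂ)
          * (x ^ k.1 * (conj x) ^ k.2) := by
      intro k
      simp only [hv_def, map_mul, map_pow, Complex.conj_conj, Complex.conj_ofReal, hx_def]
      ring
    rw [tsum_congr hterm, tsum_mul_left,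
      ← tsum_mul_tsum_of_summable_norm hgs1 hgs2,
      tsum_geometric_of_norm_lt_one (by simpa using hx),
      tsum_geometric_of_norm_lt_one (by simpa using hxc)]
    have hz : (1:ℂ) - conj (l j) * l i = 1 - x := by rw [hx_def]; ring
    have h1x : (1:ℂ) - x ≠ 0 := by rw [← hz]; exact hden i j
    have h1xc : (1:ℂ) - conj x ≠ 0 := by
      intro h
      apply h1x
      have := congrArg (starRingEnd ℂ) h
      simpa using this
    have hnsq : ((Complex.normSq (1 - conj (l j) * l i) : ℝ) : ℂ)
        = (1 - x) * (1 - conj x) := by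
      rw [← Complex.mul_conj, hz]
      congr 1
      simp
    rw [hs_def, Complex.ofReal_div, Complex.ofReal_mul, hnsq, div_eq_mul_inv, mul_inv]
  have hGramS : IsGram (fun i j => ((s i j : ℝ) : ℂ)) := ⟨ℕ × ℕ, v, hvsum, hGramEq⟩
  obtain ⟨hq1sum, hq1eq⟩ := gram_eq v hvsum c
  -- strictness via Vandermonde
  have hex : ∃ k : ℕ × ℕ, (∑ i, c i * v k i) ≠ 0 := by
    by_contra h
    push_neg at h
    have hvand : ∀ m : Fin n,
        ∑ i, (c i * ((1 - Complex.normSq (l i) : ℝ) : ℂ)) * l i ^ (m : ℕ) = 0 := by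
      intro m
      have h0 := h ((m : ℕ), 0)
      rw [← h0]
      refine Finset.sum_congr rfl fun i _ => ?_
      simp [hv_def]
      ring
    have hzero : (fun i => c i * ((1 - Complex.normSq (l i) : ℝ) : ℂ)) = 0 :=
      Matrix.eq_zero_of_forall_pow_sum_mul_pow_eq_zero hinj (fun m => hvand m)
    apply hc
    funext i
    have h1 := congrFun hzero i
    simp only [Pi.zero_apply] at h1
    rcases mul_eq_zero.mp h1 with h' | h'
    · exact h'
    · exfalso
      rw [Complex.ofReal_eq_zero] at h'
      exact (hb i).ne' h'
  obtain ⟨k0, hk0⟩ := hex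
  have hr1pos : 0 < ∑' k : ℕ × ℕ, Complex.normSq (∑ i, c i * v k i) :=
    Summable.tsum_pos hq1sum (fun k => Complex.normSq_nonneg _) k0 (Complex.normSq_pos.mpr hk0)
  -- the quadratic forms of the Hadamard powers
  have hQm : ∀ m : ℕ, ∃ r : ℝ, 0 ≤ r ∧
      ∑ i, ∑ j, c i * conj (c j) * ((s i j : ℝ) : ℂ) ^ m = (r : ℂ) := by
    intro m
    obtain ⟨ι, u, hu, hK⟩ := hGramS.pow m
    have hK' : ∀ i j, ((s i j : ℝ) : ℂ) ^ m = ∑' k, u k i * conj (u k j) := hK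
    obtain ⟨hsum, heq⟩ := gram_eq u hu c
    refine ⟨∑' k, Complex.normSq (∑ i, c i * u k i),
      tsum_nonneg (fun k => Complex.normSq_nonneg _), ?_⟩
    calc ∑ i, ∑ j, c i * conj (c j) * ((s i j : ℝ) : ℂ) ^ m
        = ∑ i, ∑ j, c i * conj (c j) * (∑' k, u k i * conj (u k j)) := by
          exact Finset.sum_congr rfl fun i _ => Finset.sum_congr rfl fun j _ => by
            rw [hK' i j]
      _ = _ := heq
  choose r hr0 hrEq using hQm
  have hr1 : r 1 = ∑' k : ℕ × ℕ, Complex.normSq (∑ i, c i * v k i) := by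
    have h1 : ((r 1 : ℝ) : ℂ)
        = ((∑' k : ℕ × ℕ, Complex.normSq (∑ i, c i * v k i) : ℝ) : ℂ) := by
      rw [← hrEq 1, ← hq1eq]
      exact Finset.sum_congr rfl fun i _ => Finset.sum_congr rfl fun j _ => by
        rw [pow_one, hGramEq i j]
    exact_mod_cast h1
  -- boundedness of the forms
  set C : ℝ := ∑ i, ∑ j, ‖c i‖ * ‖c j‖ with hC
  have hrC : ∀ m, r m ≤ C := by
    intro m
    have h2 : ‖((r m : ℝ) : ℂ)‖ ≤ C := by
      rw [← hrEq m]
      refine (norm_sum_le _ _).trans ?_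
      refine Finset.sum_le_sum fun i _ => ?_
      refine (norm_sum_le _ _).trans ?_
      refine Finset.sum_le_sum fun j _ => ?_
      rw [norm_mul, norm_mul, norm_pow, RCLike.norm_conj, Complex.norm_real,
        Real.norm_eq_abs, abs_of_nonneg (hs_nonneg i j)]
      have h3 : s i j ^ m ≤ 1 := pow_le_one₀ (hs_nonneg i j) (hs_le_one i j)
      have h4 : (0:ℝ) ≤ s i j ^ m := pow_nonneg (hs_nonneg i j) m
      nlinarith [norm_nonneg (c i), norm_nonneg (c j), mul_nonneg (norm_nonneg (c i)) (norm_nonneg (c j))]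
    calc r m ≤ |r m| := le_abs_self _
      _ = ‖((r m : ℝ) : ℂ)‖ := by rw [Complex.norm_real, Real.norm_eq_abs]
      _ ≤ C := h2
  -- the positive real series
  set a : ℕ → ℝ := fun m => t ^ m / m.factorial * r m with ha_def
  have ha_nonneg : ∀ m, 0 ≤ a m := fun m => mul_nonneg (by positivity) (hr0 m)
  have ha_sum : Summable a := by
    refine Summable.of_nonneg_of_le ha_nonneg (fun m => ?_)
      ((Real.summable_pow_div_factorial t).mul_left C)
    have h5 : t ^ m / (m.factorial : ℝ) * r m ≤ t ^ m / (m.factorial : ℝ) * C :=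
      mul_le_mul_of_nonneg_left (hrC m) (by positivity)
    calc a m = t ^ m / (m.factorial : ℝ) * r m := rfl
      _ ≤ t ^ m / (m.factorial : ℝ) * C := h5
      _ = C * (t ^ m / (m.factorial : ℝ)) := by ring
  have ha1 : 0 < a 1 := by
    have : a 1 = t * r 1 := by simp [ha_def]
    rw [this, hr1]
    exact mul_pos ht hr1pos
  have htsum_pos : 0 < ∑' m, a m := Summable.tsum_pos ha_sum ha_nonneg 1 ha1
  -- the exponential series
  have hexp : ∀ x : ℝ, Real.exp x = ∑' m : ℕ, x ^ m / m.factorial := by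
    intro x
    rw [Real.exp_eq_exp_ℝ, NormedSpace.exp_eq_tsum_div]
  have hsumm : ∀ i j : Fin n, Summable fun m : ℕ =>
      c i * conj (c j) * (((t * s i j) ^ m / m.factorial : ℝ) : ℂ) :=
    fun i j => Summable.mul_left _
      (Complex.summable_ofReal.mpr (Real.summable_pow_div_factorial _))
  have hU : (∑ i, ∑ j, c i * conj (c j) * ((Real.exp (t * s i j) : ℝ) : ℂ))
      = ((∑' m, a m : ℝ) : ℂ) := by
    have e1 : ∀ i j : Fin n, c i * conj (c j) * ((Real.exp (t * s i j) : ℝ) : ℂ)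
        = ∑' m : ℕ, c i * conj (c j) * (((t * s i j) ^ m / m.factorial : ℝ) : ℂ) := by
      intro i j
      rw [hexp, Complex.ofReal_tsum, tsum_mul_left]
    rw [Finset.sum_congr rfl fun i _ => Finset.sum_congr rfl fun j _ => e1 i j]
    rw [Finset.sum_congr rfl fun i _ => (Summable.tsum_finsetSum (fun j _ => hsumm i j)).symm]
    rw [(Summable.tsum_finsetSum (fun i _ => summable_sum (fun j _ => hsumm i j))).symm]
    have e2 : ∀ m : ℕ, (∑ i, ∑ j, c i * conj (c j) * (((t * s i j) ^ m / m.factorial : ℝ) : ℂ))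
        = ((a m : ℝ) : ℂ) := by
      intro m
      have e3 : ∀ i j : Fin n, c i * conj (c j) * (((t * s i j) ^ m / m.factorial : ℝ) : ℂ)
          = ((t ^ m / m.factorial : ℝ) : ℂ) * (c i * conj (c j) * ((s i j : ℝ) : ℂ) ^ m) := by
        intro i j
        push_cast
        ring
      rw [Finset.sum_congr rfl fun i _ => Finset.sum_congr rfl fun j _ => e3 i j]
      simp only [← Finset.mul_sum]
      rw [hrEq m, ha_def]
      push_cast
      ring
    rw [tsum_congr e2, ← Complex.ofReal_tsum]
  -- final assembly
  have hmain : (∑ i, ∑ j, c i * conj (c j) *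
        ((Real.exp (-t * pseudoHypDistSq (l i) (l j)) : ℝ) : ℂ))
      = ((Real.exp (-t) : ℝ) : ℂ)
        * ∑ i, ∑ j, c i * conj (c j) * ((Real.exp (t * s i j) : ℝ) : ℂ) := by
    rw [Finset.mul_sum]
    refine Finset.sum_congr rfl fun i _ => ?_
    rw [Finset.mul_sum]
    refine Finset.sum_congr rfl fun j _ => ?_
    rw [hdist i j, show -t * (1 - s i j) = -t + t * s i j from by ring, Real.exp_add]
    push_cast
    ring
  rw [hmain, hU, ← Complex.ofReal_mul, Complex.zero_lt_real]
  exact mul_pos (Real.exp_pos _) htsum_pos
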